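/- arXiv:1106.6104 — 2 statements merged into one kernel-verified Lean document; each statement's English description precedes it below -/
import Mathlib

section
/- Consider an $N$-armed bandit ($N \ge 2$) where arm $n$ yields i.i.d. rewards with mean $\theta_n$, all distributions light-tailed and satisfying the Chernoff bound $\Pr(|\overline{\theta}_n(\tau) - \theta_n| \ge \delta) \le 2e^{-a\delta^2 \tau}$ for sample means over $\tau$ observations. Order the means as $\theta_{\sigma(1)} \ge \cdots \ge \theta_{\sigma(N)}$ and set $\Delta_n = \theta_{\sigma(1)} - \theta_{\sigma(n)}$. Suppose at each exploitation time $t$, every arm has been observed at least $w \log t$ times during exploration, with $\delta \le \Delta_2/2$ and $a\delta^2 w > 1$, and the arm with the largest exploration sample mean is played. Then the expected number of exploitation times up to horizon $T$ at which the played arm is not the best arm is at most $2N(1 + \frac{1}{a\delta^2 w - 1})$, uniformly in $T$. -/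
open MeasureTheory Real

lemma sum_rpow_neg_le (p : ℝ) (hp : 1 < p) (T : ℕ) :
    ∑ t ∈ Finset.Icc 1 T, ((t : ℝ) ^ (-p)) ≤ 1 + 1 / (p - 1) := by
  have hden : (0:ℝ) < p - 1 := by linarith
  rcases Nat.eq_zero_or_pos T with hT | hT
  · simp [hT]
    positivity
  have hanti : AntitoneOn (fun x : ℝ => x ^ (-p)) (Set.Icc ((1:ℕ):ℝ) T) := by
    intro x hx y hy hxy
    have hx0 : (0:ℝ) < x := lt_of_lt_of_le (by norm_num) hx.1
    have hy0 : (0:ℝ) < y := lt_of_lt_of_le (by norm_num) hy.1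
    simp only
    rw [Real.rpow_neg hx0.le, Real.rpow_neg hy0.le]
    exact inv_anti₀ (Real.rpow_pos_of_pos hx0 p)
      (Real.rpow_le_rpow hx0.le hxy (le_of_lt (lt_trans one_pos hp)))
  have key := AntitoneOn.sum_le_integral_Ico hT hanti
  norm_num at key
  have hint : ∫ x in (1:ℝ)..(T:ℝ), x ^ (-p) =
      ((T:ℝ) ^ (-p + 1) - (1:ℝ) ^ (-p + 1)) / (-p + 1) := by
    rw [integral_rpow]
    right
    constructor
    · intro h; linarith
    · intro h
      rcases Set.mem_uIcc.1 h with ⟨h1, _⟩ | ⟨_, h2⟩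
      · linarith
      · have : (1:ℝ) ≤ (T:ℝ) := by exact_mod_cast hT
        linarith
  have hTpow : (0:ℝ) ≤ (T:ℝ) ^ (-p + 1) := Real.rpow_nonneg (Nat.cast_nonneg T) _
  have hbound : ∫ x in (1:ℝ)..(T:ℝ), x ^ (-p) ≤ 1 / (p - 1) := by
    rw [hint, Real.one_rpow]
    have heq : ((T:ℝ) ^ (-p + 1) - 1) / (-p + 1) = (1 - (T:ℝ) ^ (-p + 1)) / (p - 1) := by
      rw [div_eq_div_iff (by linarith) hden.ne']
      ring
    rw [heq]
    gcongr
    linarith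
  have hIcc : Finset.Icc 1 T = insert 1 (Finset.Ico 1 T |>.image (· + 1)) := by
    ext t
    simp only [Finset.mem_Icc, Finset.mem_insert, Finset.mem_image, Finset.mem_Ico]
    constructor
    · rintro ⟨h1, h2⟩
      rcases Nat.eq_or_lt_of_le h1 with h | h
      · left; omega
      · right; exact ⟨t - 1, by omega, by omega⟩
    · rintro (rfl | ⟨s, ⟨h1, h2⟩, rfl⟩)
      · omega
      · omega
  rw [hIcc, Finset.sum_insert (by simp), Finset.sum_image (by intro x _ y _ h; simpa using h)]
  have h2 : ∑ i ∈ Finset.Ico 1 T, ((i + 1 : ℕ) : ℝ) ^ (-p) ≤ 1 / (p - 1) := by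
    calc ∑ i ∈ Finset.Ico 1 T, ((i + 1 : ℕ) : ℝ) ^ (-p)
        = ∑ i ∈ Finset.Ico 1 T, ((i : ℝ) + 1) ^ (-p) := by
          apply Finset.sum_congr rfl; intro i _; norm_num
      _ ≤ _ := key.trans hbound
  simp only [Nat.cast_one, Real.one_rpow]
  linarith

/-- DSEE exploitation error bound: if at every exploitation time `t` each arm's
exploration sample mean has been computed from at least `w log t` observations and
satisfies the Chernoff bound `Pr(|θ̄ₙ(τ) - θₙ| ≥ δ) ≤ 2 exp(-aδ²τ)`, with
`δ ≤ Δ₂/2` and `aδ²w > 1`, and the arm with the largest sample mean is played, then the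
expected number of exploitation times up to `T` at which the played arm is not the best
arm is at most `2N(1 + 1/(aδ²w - 1))`, uniformly in `T`. -/
theorem dsee_exploitation_error_bound {Ω : Type*} [MeasurableSpace Ω]
    (ℙ : Measure Ω) [IsProbabilityMeasure ℙ]
    (N : ℕ) (hN : 2 ≤ N) (θ : Fin N → ℝ)
    (θbar : Fin N → ℕ → Ω → ℝ)
    (E : Set ℕ) [DecidablePred (· ∈ E)] (hE : ∀ t ∈ E, 1 ≤ t)
    (played : ℕ → Ω → Fin N) (best : Fin N)
    (hbest : ∀ n, θ n ≤ θ best)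
    (Δ₂ : ℝ) (hΔ₂pos : 0 < Δ₂) (hΔ₂ : ∀ n, n ≠ best → Δ₂ ≤ θ best - θ n)
    (a δ w : ℝ) (ha : 0 < a) (hδ0 : 0 < δ) (hδ : δ ≤ Δ₂ / 2) (hw : 1 < a * δ ^ 2 * w)
    (τ : Fin N → ℕ → ℕ)
    (hτ : ∀ n t, t ∈ E → w * Real.log t ≤ τ n t)
    (hdev : ∀ n t, t ∈ E →
      ℙ {ω | δ ≤ |θbar n t ω - θ n|} ≤ ENNReal.ofReal (2 * exp (-(a * δ ^ 2 * τ n t))))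
    (hplay : ∀ t ∈ E, ∀ ω, ∀ n, θbar n t ω ≤ θbar (played t ω) t ω)
    (T : ℕ) :
    ∑ t ∈ (Finset.range (T + 1)).filter (· ∈ E), ℙ {ω | played t ω ≠ best} ≤
      ENNReal.ofReal (2 * N * (1 + 1 / (a * δ ^ 2 * w - 1))) := by
  set p := a * δ ^ 2 * w with hp
  have haδ : (0:ℝ) < a * δ ^ 2 := by positivity
  -- per-time bound
  have hstep : ∀ t ∈ (Finset.range (T + 1)).filter (· ∈ E),
      ℙ {ω | played t ω ≠ best} ≤ ENNReal.ofReal (2 * N * (t : ℝ) ^ (-p)) := by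
    intro t ht
    have htE : t ∈ E := (Finset.mem_filter.1 ht).2
    have ht1 : 1 ≤ t := hE t htE
    have ht1R : (1:ℝ) ≤ (t:ℝ) := by exact_mod_cast ht1
    have hsub : {ω | played t ω ≠ best} ⊆ ⋃ n, {ω | δ ≤ |θbar n t ω - θ n|} := by
      intro ω hω
      by_contra hc
      simp only [Set.mem_iUnion, Set.mem_setOf_eq, not_exists, not_le] at hc
      have h1 := abs_lt.1 (hc best)
      have h2 := abs_lt.1 (hc (played t ω))
      have h3 := hplay t htE ω best
      have h4 := hΔ₂ (played t ω) hω
      linarith [h1.1, h2.2]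
    have hexp : ∀ n : Fin N, exp (-(a * δ ^ 2 * τ n t)) ≤ (t:ℝ) ^ (-p) := by
      intro n
      rw [Real.rpow_def_of_pos (by linarith : (0:ℝ) < (t:ℝ))]
      apply Real.exp_le_exp.2
      have hlt := hτ n t htE
      have hlog : 0 ≤ Real.log t := Real.log_nonneg ht1R
      have : p * Real.log t ≤ a * δ ^ 2 * τ n t := by
        calc p * Real.log t = (a * δ ^ 2) * (w * Real.log t) := by ring
          _ ≤ (a * δ ^ 2) * τ n t := by
              exact mul_le_mul_of_nonneg_left hlt haδ.le
      nlinarith [this]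
    calc ℙ {ω | played t ω ≠ best}
        ≤ ℙ (⋃ n, {ω | δ ≤ |θbar n t ω - θ n|}) := measure_mono hsub
      _ ≤ ∑' (n : Fin N), ℙ {ω | δ ≤ |θbar n t ω - θ n|} := measure_iUnion_le _
      _ = ∑ n, ℙ {ω | δ ≤ |θbar n t ω - θ n|} := tsum_fintype _
      _ ≤ ∑ n : Fin N, ENNReal.ofReal (2 * (t:ℝ) ^ (-p)) := by
          apply Finset.sum_le_sum
          intro n _
          refine (hdev n t htE).trans (ENNReal.ofReal_le_ofReal ?_)
          have := hexp n
          nlinarith [this]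
      _ = (N : ENNReal) * ENNReal.ofReal (2 * (t:ℝ) ^ (-p)) := by
          simp [Finset.sum_const, nsmul_eq_mul]
      _ = ENNReal.ofReal (2 * N * (t:ℝ) ^ (-p)) := by
          rw [← ENNReal.ofReal_natCast N, ← ENNReal.ofReal_mul (Nat.cast_nonneg N)]
          congr 1
          ring
  have hp1 : 1 < p := hw
  have hden : (0:ℝ) < p - 1 := by linarith
  calc ∑ t ∈ (Finset.range (T + 1)).filter (· ∈ E), ℙ {ω | played t ω ≠ best}
      ≤ ∑ t ∈ (Finset.range (T + 1)).filter (· ∈ E),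
          ENNReal.ofReal (2 * N * (t : ℝ) ^ (-p)) := Finset.sum_le_sum hstep
    _ ≤ ∑ t ∈ Finset.Icc 1 T, ENNReal.ofReal (2 * N * (t : ℝ) ^ (-p)) := by
        apply Finset.sum_le_sum_of_subset
        intro t ht
        rcases Finset.mem_filter.1 ht with ⟨htr, htE⟩
        rw [Finset.mem_Icc]
        exact ⟨hE t htE, by have := Finset.mem_range.1 htr; omega⟩
    _ = ENNReal.ofReal (∑ t ∈ Finset.Icc 1 T, 2 * N * (t : ℝ) ^ (-p)) := by
        rw [ENNReal.ofReal_sum_of_nonneg]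
        intro t _
        positivity
    _ ≤ ENNReal.ofReal (2 * N * (1 + 1 / (p - 1))) := by
        apply ENNReal.ofReal_le_ofReal
        rw [← Finset.mul_sum]
        apply mul_le_mul_of_nonneg_left (sum_rpow_neg_le p hp1 T)
        positivity
end

section
/- Under the DSEE policy with exploration sequence defined by including time $t$ whenever $|\mathcal{A}(t-1)| < N\lceil w \log t \rceil$, where $w > \frac{1}{a\delta^2}$, $\delta = \min\{c/2, \zeta u_0\}$ for a constant $c \in (0, \Delta_2)$, the regret satisfies for all $T$: $R_T^{\pi^*}(\mathcal{F}) \le \sum_{n=2}^{N} \lceil w \log T \rceil \Delta_n + 2N\Delta_N\left(1 + \frac{1}{a\delta^2 w - 1}\right)$. -/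
open MeasureTheory Real

lemma dsee_aux_sum_mod {β : Type*} [AddCommMonoid β] (f : ℕ → β) (N : ℕ) :
    ∀ m, ∑ j ∈ Finset.range (m * N), f (j % N) = m • ∑ i ∈ Finset.range N, f i := by
  intro m
  induction m with
  | zero => simp
  | succ m ih =>
    have h : (m + 1) * N = m * N + N := by ring
    rw [h, Finset.sum_range_add, ih, succ_nsmul]
    congr 1
    apply Finset.sum_congr rfl
    intro i hi
    congr 1
    rw [mul_comm, Nat.mul_add_mod, Nat.mod_eq_of_lt (Finset.mem_range.mp hi)]

lemma dsee_aux_count (Nn L m n : ℕ) (hn : n < Nn) (hm : Nn * L ≤ m) :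
    L ≤ ((Finset.Icc 1 m).filter (fun k => (k - 1) % Nn = n)).card := by
  have key : ∀ m', ((Finset.Icc 1 m').filter (fun k => (k - 1) % Nn = n)).card
      = ∑ j ∈ Finset.range m', (if j % Nn = n then 1 else 0) := by
    intro m'
    rw [Finset.card_filter, ← Finset.Ico_add_one_right_eq_Icc, Finset.sum_Ico_eq_sum_range]
    simp
  have h1 : ((Finset.Icc 1 (Nn * L)).filter (fun k => (k - 1) % Nn = n)).card = L := by
    rw [key, mul_comm Nn L,
      dsee_aux_sum_mod (fun x => if x = n then 1 else 0) Nn L,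
      Finset.sum_ite_eq' (Finset.range Nn) n (fun _ => 1)]
    simp [Finset.mem_range.mpr hn]
  calc L = ((Finset.Icc 1 (Nn * L)).filter (fun k => (k - 1) % Nn = n)).card := h1.symm
    _ ≤ _ := Finset.card_le_card
        (Finset.monotone_filter_left _ (Finset.Icc_subset_Icc_right hm))

lemma dsee_aux_series (p : ℝ) (hp : 1 < p) (T : ℕ) :
    ∑ t ∈ Finset.Icc 1 T, ((t : ℝ)) ^ (-p) ≤ 1 + 1 / (p - 1) := by
  have hp0 : (0:ℝ) < p - 1 := by linarith
  rcases Nat.lt_or_ge T 1 with hT | hT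
  · interval_cases T
    simp
    positivity
  · have hsplit : Finset.Icc 1 T = insert 1 (Finset.Icc 2 T) := by
      ext s; simp [Finset.mem_Icc, Finset.mem_insert]; omega
    rw [hsplit, Finset.sum_insert (by simp)]
    have h1 : ((1:ℕ):ℝ) ^ (-p) = 1 := by norm_num
    rw [h1]
    have hmain : ∑ t ∈ Finset.Icc 2 T, ((t : ℝ)) ^ (-p) ≤ 1 / (p - 1) := by
      have hrw : ∑ t ∈ Finset.Icc 2 T, ((t : ℝ)) ^ (-p)
          = ∑ i ∈ Finset.range (T - 1), (fun x : ℝ => x ^ (-p)) ((1:ℝ) + ((i + 1 : ℕ) : ℝ)) := by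
        rw [← Finset.Ico_add_one_right_eq_Icc, Finset.sum_Ico_eq_sum_range]
        have h2 : T + 1 - 2 = T - 1 := by omega
        rw [h2]
        apply Finset.sum_congr rfl
        intro i _
        push_cast
        ring_nf
      rw [hrw]
      have hanti : AntitoneOn (fun x : ℝ => x ^ (-p)) (Set.Icc (1:ℝ) (1 + (T - 1 : ℕ))) := by
        intro x hx y hy hxy
        simp only
        rw [Real.rpow_neg (by linarith [hx.1]), Real.rpow_neg (by linarith [hx.1, hxy])]
        exact inv_anti₀ (Real.rpow_pos_of_pos (by linarith [hx.1]) _)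
          (Real.rpow_le_rpow (by linarith [hx.1]) hxy (by linarith))
      have hint := AntitoneOn.sum_le_integral (x₀ := (1:ℝ)) (a := T - 1) hanti
      refine le_trans hint ?_
      rw [integral_rpow (Or.inr ⟨by intro h; rw [neg_eq_iff_eq_neg] at h; linarith, by
        rw [Set.uIcc_of_le (le_add_of_nonneg_right (Nat.cast_nonneg _) : (1:ℝ) ≤ 1 + ((T - 1 : ℕ) : ℝ))]
        intro h
        have := (Set.mem_Icc.mp h).1
        linarith⟩)]
      have h1p : (1:ℝ) ^ (-p + 1) = 1 := Real.one_rpow _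
      rw [h1p]
      rw [show (-p + 1 : ℝ) = -(p - 1) by ring, div_neg, ← neg_div, neg_sub]
      gcongr
      linarith [Real.rpow_nonneg (show (0:ℝ) ≤ 1 + ((T - 1 : ℕ) : ℝ) by positivity) (-(p - 1))]
    linarith


/-- DSEE regret bound for light-tailed rewards (Theorem 1): with exploration sequence
`t ∈ A ↔ |A(t-1)| < N⌈w log t⌉`, constants `a, ζ, u₀` from the Chernoff–Hoeffding bound,
`c ∈ (0, Δ₂)`, `δ = min{c/2, ζu₀}`, `w > 1/(aδ²)`, round-robin exploration and
largest-sample-mean exploitation, the regret satisfies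
`R_T ≤ ∑_{n=2}^N ⌈w log T⌉ Δₙ + 2NΔ_N(1 + 1/(aδ²w - 1))` for all `T`. -/
theorem dsee_regret_light_tailed {Ω : Type*} [MeasurableSpace Ω]
    (ℙ : Measure Ω) [IsProbabilityMeasure ℙ]
    (N : ℕ) (hN : 2 ≤ N) (θ : Fin N → ℝ)
    -- σ sorts the means in nonincreasing order; Δ n is the gap of the rank-n arm
    (σ : Equiv.Perm (Fin N)) (hσ : ∀ i j : Fin N, i ≤ j → θ (σ j) ≤ θ (σ i))
    (Δ : Fin N → ℝ) (hΔ : ∀ n, Δ n = θ (σ ⟨0, by omega⟩) - θ (σ n))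
    -- constants for the Chernoff–Hoeffding bound and the exploration cardinality
    (a ζ u₀ c δ w : ℝ) (ha : 0 < a) (hζ : 0 < ζ) (hu₀ : 0 < u₀)
    (hc0 : 0 < c) (hc : c < Δ ⟨1, by omega⟩)
    (hδ : δ = min (c / 2) (ζ * u₀)) (hw : 1 / (a * δ ^ 2) < w)
    -- the exploration sequence `A` and its counting function
    (A : Set ℕ) [DecidablePred (· ∈ A)]
    (cnt : ℕ → ℕ) (hcnt : ∀ t, cnt t = ((Finset.Icc 1 t).filter (· ∈ A)).card)
    (hA : ∀ t, 1 ≤ t → (t ∈ A ↔ cnt (t - 1) < N * ⌈w * Real.log t⌉₊))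
    -- the arm selection policy: round-robin during exploration
    (pol : ℕ → Ω → Fin N) (hpolmeas : ∀ t, Measurable (pol t))
    (hround : ∀ t ∈ A, ∀ ω, pol t ω = ⟨(cnt t - 1) % N, Nat.mod_lt _ (by omega)⟩)
    -- sample means from exploration observations and their Chernoff deviation bound
    (τ : Fin N → ℕ → ℕ)
    (hτ : ∀ n t, τ n t = ((Finset.Icc 1 (t - 1)).filter
      (fun s => s ∈ A ∧ (cnt s - 1) % N = (n : ℕ))).card)
    (θbar : Fin N → ℕ → Ω → ℝ)
    (hdev : ∀ n t, 1 ≤ t → t ∉ A →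
      ℙ {ω | δ ≤ |θbar n t ω - θ n|} ≤ ENNReal.ofReal (2 * exp (-(a * δ ^ 2 * τ n t))))
    -- exploitation: play the arm with the largest sample mean
    (hexploit : ∀ t, 1 ≤ t → t ∉ A → ∀ ω, ∀ n, θbar n t ω ≤ θbar (pol t ω) t ω)
    -- regret
    (R : ℕ → ℝ)
    (hR : ∀ T, R T = T * θ (σ ⟨0, by omega⟩) - ∑ t ∈ Finset.Icc 1 T, ∫ ω, θ (pol t ω) ∂ℙ) :
    ∀ T, R T ≤ (∑ n ∈ Finset.univ.erase (⟨0, by omega⟩ : Fin N), (⌈w * Real.log T⌉₊ : ℝ) * Δ n)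
      + 2 * N * Δ ⟨N - 1, by omega⟩ * (1 + 1 / (a * δ ^ 2 * w - 1)) := by
  intro T
  have hN0 : 0 < N := by omega
  have hδ0 : 0 < δ := by rw [hδ]; exact lt_min (by linarith) (by positivity)
  have haδ : 0 < a * δ ^ 2 := by positivity
  have hp1 : 1 < a * δ ^ 2 * w := by
    rw [div_lt_iff₀ haδ] at hw
    nlinarith [hw]
  have hw0 : 0 < w := by nlinarith [hw, haδ, div_nonneg zero_le_one haδ.le]
  have hp0 : (0:ℝ) < a * δ ^ 2 * w - 1 := by linarith
  -- order facts
  have hle : ∀ i : Fin N, θ i ≤ θ (σ ⟨0, hN0⟩) := by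
    intro i
    have h := hσ ⟨0, hN0⟩ (σ.symm i) (by simp [Fin.le_def])
    simpa using h
  have hlb : ∀ i : Fin N, θ (σ ⟨N - 1, by omega⟩) ≤ θ i := by
    intro i
    have h := hσ (σ.symm i) ⟨N - 1, by omega⟩ (by rw [Fin.le_def]; simp; omega)
    simpa using h
  have hΔnn : ∀ n : Fin N, 0 ≤ Δ n := by
    intro n; rw [hΔ]; linarith [hle (σ n)]
  have hΔub' : ∀ i : Fin N, θ (σ ⟨0, hN0⟩) - θ i ≤ Δ ⟨N - 1, by omega⟩ := by
    intro i; rw [hΔ]; linarith [hlb i]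
  have hΔmaxnn : 0 ≤ Δ ⟨N - 1, by omega⟩ := hΔnn _
  -- cnt facts
  have hcnt_mono : Monotone cnt := by
    intro s t hst
    rw [hcnt, hcnt]
    exact Finset.card_le_card (Finset.monotone_filter_left _ (Finset.Icc_subset_Icc_right hst))
  have hcnt_succ : ∀ t : ℕ, 1 ≤ t → t ∈ A → cnt t = cnt (t - 1) + 1 := by
    intro t ht hta
    rw [hcnt, hcnt]
    have hins : Finset.Icc 1 t = insert t (Finset.Icc 1 (t - 1)) := by
      ext s; simp only [Finset.mem_Icc, Finset.mem_insert]; omega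
    rw [hins, Finset.filter_insert, if_pos hta, Finset.card_insert_of_notMem]
    intro hmem
    have h2 := (Finset.mem_filter.mp hmem).1
    rw [Finset.mem_Icc] at h2
    omega
  have hcnt_pos : ∀ t : ℕ, 1 ≤ t → t ∈ A → 1 ≤ cnt t := by
    intro t ht hta; rw [hcnt_succ t ht hta]; omega
  have hcnt_lt : ∀ s t : ℕ, s ≤ t - 1 → 1 ≤ t → t ∈ A → cnt s < cnt t := by
    intro s t hst ht hta
    calc cnt s ≤ cnt (t - 1) := hcnt_mono hst
      _ < cnt t := by rw [hcnt_succ t ht hta]; omega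
  have hinj : ∀ u : ℕ, ∀ x ∈ (Finset.Icc 1 u).filter (· ∈ A),
      ∀ y ∈ (Finset.Icc 1 u).filter (· ∈ A), cnt x = cnt y → x = y := by
    intro u x hx y hy hxy
    simp only [Finset.mem_filter, Finset.mem_Icc] at hx hy
    by_contra hne
    rcases Nat.lt_or_ge x y with h | h
    · have := hcnt_lt x y (by omega) (by omega) hy.2; omega
    · have hyx : y < x := by omega
      have := hcnt_lt y x (by omega) (by omega) hx.2; omega
  have himage : ∀ u : ℕ, ((Finset.Icc 1 u).filter (· ∈ A)).image cnt = Finset.Icc 1 (cnt u) := by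
    intro u
    apply Finset.eq_of_subset_of_card_le
    · intro k hk
      rw [Finset.mem_image] at hk
      obtain ⟨s, hs, rfl⟩ := hk
      simp only [Finset.mem_filter, Finset.mem_Icc] at hs
      rw [Finset.mem_Icc]
      exact ⟨hcnt_pos s hs.1.1 hs.2, hcnt_mono hs.1.2⟩
    · have h1 : (((Finset.Icc 1 u).filter (· ∈ A)).image cnt).card = cnt u := by
        rw [Finset.card_image_of_injOn (fun x hx y hy h => hinj u x hx y hy h), ← hcnt]
      rw [Nat.card_Icc, h1]
      omega
  have hLmono : ∀ s t : ℕ, 1 ≤ s → s ≤ t → ⌈w * Real.log s⌉₊ ≤ ⌈w * Real.log t⌉₊ := by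
    intro s t hs hst
    apply Nat.ceil_mono
    apply mul_le_mul_of_nonneg_left _ hw0.le
    apply Real.log_le_log (by exact_mod_cast hs)
    exact_mod_cast hst
  have hcntT : ∀ t : ℕ, cnt t ≤ N * ⌈w * Real.log t⌉₊ := by
    intro t
    by_cases hE : ((Finset.Icc 1 t).filter (· ∈ A)).Nonempty
    · set t' := ((Finset.Icc 1 t).filter (· ∈ A)).max' hE with ht'
      have hmem := ((Finset.Icc 1 t).filter (· ∈ A)).max'_mem hE
      rw [← ht'] at hmem
      simp only [Finset.mem_filter, Finset.mem_Icc] at hmem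
      have heq : cnt t = cnt t' := by
        rw [hcnt, hcnt]
        congr 1
        ext s
        simp only [Finset.mem_filter, Finset.mem_Icc]
        constructor
        · intro hs
          refine ⟨⟨hs.1.1, ?_⟩, hs.2⟩
          exact Finset.le_max' _ s (Finset.mem_filter.mpr ⟨Finset.mem_Icc.mpr hs.1, hs.2⟩)
        · intro hs
          exact ⟨⟨hs.1.1, le_trans hs.1.2 hmem.1.2⟩, hs.2⟩
      rw [heq, hcnt_succ t' hmem.1.1 hmem.2]
      have h1 := (hA t' hmem.1.1).mp hmem.2
      have h2 : N * ⌈w * Real.log t'⌉₊ ≤ N * ⌈w * Real.log t⌉₊ :=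
        Nat.mul_le_mul_left _ (hLmono t' t hmem.1.1 hmem.1.2)
      omega
    · rw [hcnt, Finset.not_nonempty_iff_eq_empty.mp hE]
      simp
  -- τ lower bound at exploitation times
  have hτge : ∀ (n : Fin N) (t : ℕ), 1 ≤ t → t ∉ A → ⌈w * Real.log t⌉₊ ≤ τ n t := by
    intro n t ht htA
    have hM : N * ⌈w * Real.log t⌉₊ ≤ cnt (t - 1) := by
      rw [hA t ht] at htA
      omega
    rw [hτ]
    have hff : (Finset.Icc 1 (t - 1)).filter (fun s => s ∈ A ∧ (cnt s - 1) % N = (n : ℕ))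
        = ((Finset.Icc 1 (t - 1)).filter (· ∈ A)).filter (fun s => (cnt s - 1) % N = (n : ℕ)) := by
      rw [Finset.filter_filter]
    rw [hff]
    have hcard : (((Finset.Icc 1 (t - 1)).filter (· ∈ A)).filter
        (fun s => (cnt s - 1) % N = (n : ℕ))).card
        = ((Finset.Icc 1 (cnt (t - 1))).filter (fun k => (k - 1) % N = (n : ℕ))).card := by
      rw [← himage (t - 1), Finset.filter_image, Finset.card_image_of_injOn]
      intro x hx y hy hxy
      exact hinj (t - 1) x (Finset.mem_of_mem_filter x hx) y (Finset.mem_of_mem_filter y hy) hxy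
    rw [hcard]
    exact dsee_aux_count N _ _ n n.isLt hM
  -- integrability
  have hmeasθ : ∀ t : ℕ, Measurable fun ω => θ (pol t ω) :=
    fun t => (measurable_of_countable θ).comp (hpolmeas t)
  have hC : ∀ (t : ℕ) (ω : Ω), ‖θ (pol t ω)‖ ≤ ∑ i : Fin N, ‖θ i‖ := by
    intro t ω
    exact Finset.single_le_sum (f := fun i => ‖θ i‖) (fun i _ => norm_nonneg _)
      (Finset.mem_univ _)
  have hint : ∀ t : ℕ, Integrable (fun ω => θ (pol t ω)) ℙ := by
    intro t
    refine Integrable.mono' (integrable_const (∑ i : Fin N, ‖θ i‖))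
      (hmeasθ t).aestronglyMeasurable ?_
    exact ae_of_all _ fun ω => hC t ω
  have hIconst : ∀ r : ℝ, ∫ (_ : Ω), r ∂ℙ = r := by
    intro r; simp
  have hstep : ∀ t, θ (σ ⟨0, hN0⟩) - ∫ ω, θ (pol t ω) ∂ℙ
      = ∫ ω, (θ (σ ⟨0, hN0⟩) - θ (pol t ω)) ∂ℙ := by
    intro t
    rw [integral_sub (integrable_const _) (hint t), hIconst]
  -- rewrite R T as a sum of per-round regrets
  rw [hR]
  have hTθ : (T : ℝ) * θ (σ ⟨0, hN0⟩) = ∑ _t ∈ Finset.Icc 1 T, θ (σ ⟨0, hN0⟩) := by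
    rw [Finset.sum_const, Nat.card_Icc]; simp
  rw [hTθ, ← Finset.sum_sub_distrib,
    ← Finset.sum_filter_add_sum_filter_not (Finset.Icc 1 T) (· ∈ A)]
  have hexp1 : ∑ t ∈ (Finset.Icc 1 T).filter (· ∈ A),
      (θ (σ ⟨0, hN0⟩) - ∫ ω, θ (pol t ω) ∂ℙ)
      ≤ ∑ n ∈ Finset.univ.erase (⟨0, hN0⟩ : Fin N), (⌈w * Real.log T⌉₊ : ℝ) * Δ n := by
    have heq : ∀ t ∈ (Finset.Icc 1 T).filter (· ∈ A),
        θ (σ ⟨0, hN0⟩) - ∫ ω, θ (pol t ω) ∂ℙ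
        = (fun k => θ (σ ⟨0, hN0⟩) - θ ⟨(k - 1) % N, Nat.mod_lt _ hN0⟩) (cnt t) := by
      intro t ht
      simp only
      have hcongr : (fun ω => θ (pol t ω))
          = fun _ : Ω => θ ⟨(cnt t - 1) % N, Nat.mod_lt _ hN0⟩ := by
        funext ω
        rw [hround t (Finset.mem_filter.mp ht).2 ω]
      rw [hcongr, hIconst]
    calc ∑ t ∈ (Finset.Icc 1 T).filter (· ∈ A), (θ (σ ⟨0, hN0⟩) - ∫ ω, θ (pol t ω) ∂ℙ)
        = ∑ t ∈ (Finset.Icc 1 T).filter (· ∈ A),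
          (fun k => θ (σ ⟨0, hN0⟩) - θ ⟨(k - 1) % N, Nat.mod_lt _ hN0⟩) (cnt t) :=
          Finset.sum_congr rfl heq
      _ = ∑ k ∈ ((Finset.Icc 1 T).filter (· ∈ A)).image cnt,
          (fun k => θ (σ ⟨0, hN0⟩) - θ ⟨(k - 1) % N, Nat.mod_lt _ hN0⟩) k :=
          (Finset.sum_image (f := fun k => θ (σ ⟨0, hN0⟩) - θ ⟨(k - 1) % N, Nat.mod_lt _ hN0⟩)
            (g := cnt) (hinj T)).symm
      _ = ∑ k ∈ Finset.Icc 1 (cnt T),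
          (θ (σ ⟨0, hN0⟩) - θ ⟨(k - 1) % N, Nat.mod_lt _ hN0⟩) := by rw [himage T]
      _ ≤ ∑ k ∈ Finset.Icc 1 (N * ⌈w * Real.log T⌉₊),
          (θ (σ ⟨0, hN0⟩) - θ ⟨(k - 1) % N, Nat.mod_lt _ hN0⟩) := by
          apply Finset.sum_le_sum_of_subset_of_nonneg
            (Finset.Icc_subset_Icc_right (hcntT T))
          intro k _ _
          have := hle (⟨(k - 1) % N, Nat.mod_lt _ hN0⟩ : Fin N)
          linarith
      _ = ∑ j ∈ Finset.range (N * ⌈w * Real.log T⌉₊),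
          (fun x => θ (σ ⟨0, hN0⟩) - θ ⟨x % N, Nat.mod_lt _ hN0⟩) (j % N) := by
          rw [← Finset.Ico_add_one_right_eq_Icc, Finset.sum_Ico_eq_sum_range]
          have h2 : N * ⌈w * Real.log T⌉₊ + 1 - 1 = N * ⌈w * Real.log T⌉₊ := by omega
          rw [h2]
          apply Finset.sum_congr rfl
          intro j _
          have hv : (1 + j - 1) % N = j % N % N := by
            rw [Nat.add_sub_cancel_left, Nat.mod_mod_of_dvd j (dvd_refl N)]
          simp only
          congr 1
          exact congrArg θ (Fin.ext hv)
      _ = ⌈w * Real.log T⌉₊ • ∑ i ∈ Finset.range N,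
          (fun x => θ (σ ⟨0, hN0⟩) - θ ⟨x % N, Nat.mod_lt _ hN0⟩) i := by
          rw [mul_comm N _]
          exact dsee_aux_sum_mod (fun x => θ (σ ⟨0, hN0⟩) - θ ⟨x % N, Nat.mod_lt _ hN0⟩) N _
      _ = (⌈w * Real.log T⌉₊ : ℝ) * ∑ i : Fin N, (θ (σ ⟨0, hN0⟩) - θ i) := by
          rw [nsmul_eq_mul]
          congr 1
          rw [← Fin.sum_univ_eq_sum_range]
          apply Finset.sum_congr rfl
          intro i _
          congr 1
          exact congrArg θ (Fin.ext (Nat.mod_eq_of_lt i.isLt))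
      _ = (⌈w * Real.log T⌉₊ : ℝ) * ∑ n ∈ Finset.univ.erase (⟨0, hN0⟩ : Fin N), Δ n := by
          congr 1
          rw [← Equiv.sum_comp σ (fun i => θ (σ ⟨0, hN0⟩) - θ i)]
          have hΔ0 : Δ ⟨0, hN0⟩ = 0 := by rw [hΔ]; ring
          rw [← Finset.add_sum_erase Finset.univ _ (Finset.mem_univ (⟨0, hN0⟩ : Fin N))]
          rw [show (θ (σ ⟨0, hN0⟩) - θ (σ ⟨0, hN0⟩)) = 0 by ring, zero_add]
          apply Finset.sum_congr rfl
          intro n _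
          rw [hΔ]
      _ = ∑ n ∈ Finset.univ.erase (⟨0, hN0⟩ : Fin N), (⌈w * Real.log T⌉₊ : ℝ) * Δ n :=
          Finset.mul_sum _ _ _
  have hexp2 : ∑ t ∈ (Finset.Icc 1 T).filter (fun t => ¬ t ∈ A),
      (θ (σ ⟨0, hN0⟩) - ∫ ω, θ (pol t ω) ∂ℙ)
      ≤ 2 * N * Δ ⟨N - 1, by omega⟩ * (1 + 1 / (a * δ ^ 2 * w - 1)) := by
    have hterm : ∀ t ∈ (Finset.Icc 1 T).filter (fun t => ¬ t ∈ A),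
        θ (σ ⟨0, hN0⟩) - ∫ ω, θ (pol t ω) ∂ℙ
        ≤ 2 * N * Δ ⟨N - 1, by omega⟩ * ((t : ℝ)) ^ (-(a * δ ^ 2 * w)) := by
      intro t ht
      obtain ⟨htIcc, htA⟩ := Finset.mem_filter.mp ht
      rw [Finset.mem_Icc] at htIcc
      have ht1 : 1 ≤ t := htIcc.1
      have hSmeas : MeasurableSet {ω | pol t ω ≠ σ ⟨0, hN0⟩} :=
        (hpolmeas t (measurableSet_singleton (σ ⟨0, hN0⟩))).compl
      have hpt : ∀ ω, θ (σ ⟨0, hN0⟩) - θ (pol t ω)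
          ≤ Set.indicator {ω | pol t ω ≠ σ ⟨0, hN0⟩} (fun _ => Δ ⟨N - 1, by omega⟩) ω := by
        intro ω
        by_cases hω : pol t ω = σ ⟨0, hN0⟩
        · rw [Set.indicator_of_notMem
            (show ω ∉ {ω | pol t ω ≠ σ ⟨0, hN0⟩} from fun hmem => hmem hω), hω]
          simp
        · rw [Set.indicator_of_mem
            (show ω ∈ {ω | pol t ω ≠ σ ⟨0, hN0⟩} from hω)]
          exact hΔub' _
      have h1 : ∫ ω, (θ (σ ⟨0, hN0⟩) - θ (pol t ω)) ∂ℙ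
          ≤ (ℙ {ω | pol t ω ≠ σ ⟨0, hN0⟩}).toReal * Δ ⟨N - 1, by omega⟩ := by
        calc ∫ ω, (θ (σ ⟨0, hN0⟩) - θ (pol t ω)) ∂ℙ
            ≤ ∫ ω, Set.indicator {ω | pol t ω ≠ σ ⟨0, hN0⟩}
              (fun _ => Δ ⟨N - 1, by omega⟩) ω ∂ℙ :=
              integral_mono ((integrable_const _).sub (hint t))
                ((integrable_const _).indicator hSmeas) hpt
          _ = (ℙ {ω | pol t ω ≠ σ ⟨0, hN0⟩}).toReal * Δ ⟨N - 1, by omega⟩ := by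
              rw [integral_indicator_const _ hSmeas, smul_eq_mul]; rfl
      have hsub : {ω | pol t ω ≠ σ ⟨0, hN0⟩} ⊆ ⋃ n : Fin N, {ω | δ ≤ |θbar n t ω - θ n|} := by
        intro ω hω
        by_contra hcon
        simp only [Set.mem_iUnion, Set.mem_setOf_eq, not_exists, not_le] at hcon
        have hri : σ.symm (pol t ω) ≠ (⟨0, hN0⟩ : Fin N) := by
          intro h
          exact hω (by rw [← Equiv.apply_symm_apply σ (pol t ω), h])
        have h1le : (⟨1, by omega⟩ : Fin N) ≤ σ.symm (pol t ω) := by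
          rw [Fin.le_def]
          have : (σ.symm (pol t ω)).val ≠ 0 := fun h => hri (Fin.ext h)
          simpa using Nat.one_le_iff_ne_zero.mpr this
        have hθi : θ (pol t ω) ≤ θ (σ ⟨1, by omega⟩) := by
          have h := hσ ⟨1, by omega⟩ (σ.symm (pol t ω)) h1le
          simpa using h
        have hd1 := hcon (σ ⟨0, hN0⟩)
        have hd2 := hcon (pol t ω)
        have hex := hexploit t ht1 htA ω (σ ⟨0, hN0⟩)
        have hδc : 2 * δ ≤ c := by
          rw [hδ]
          have := min_le_left (c / 2) (ζ * u₀)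
          linarith
        have hcΔ : c < θ (σ ⟨0, hN0⟩) - θ (σ ⟨1, by omega⟩) := by
          rw [hΔ] at hc
          linarith
        rw [abs_lt] at hd1 hd2
        linarith [hd1.1, hd1.2, hd2.1, hd2.2]
      have hexp_le : ∀ n : Fin N, 2 * Real.exp (-(a * δ ^ 2 * (τ n t)))
          ≤ 2 * ((t : ℝ)) ^ (-(a * δ ^ 2 * w)) := by
        intro n
        have hτn := hτge n t ht1 htA
        have hlog : a * δ ^ 2 * w * Real.log t ≤ a * δ ^ 2 * (τ n t) := by
          have hh1 : w * Real.log t ≤ (⌈w * Real.log t⌉₊ : ℝ) := Nat.le_ceil _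
          have hh2 : ((⌈w * Real.log t⌉₊ : ℕ) : ℝ) ≤ ((τ n t : ℕ) : ℝ) := Nat.cast_le.mpr hτn
          calc a * δ ^ 2 * w * Real.log t = a * δ ^ 2 * (w * Real.log t) := by ring
            _ ≤ a * δ ^ 2 * (τ n t) :=
              mul_le_mul_of_nonneg_left (le_trans hh1 hh2) haδ.le
        have htp : ((t : ℝ)) ^ (-(a * δ ^ 2 * w)) = Real.exp (-(a * δ ^ 2 * w * Real.log t)) := by
          rw [Real.rpow_def_of_pos (by exact_mod_cast ht1 : (0:ℝ) < (t:ℝ))]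
          ring_nf
        rw [htp]
        have h := Real.exp_le_exp.mpr (neg_le_neg hlog)
        linarith
      have hμ : ℙ {ω | pol t ω ≠ σ ⟨0, hN0⟩}
          ≤ ENNReal.ofReal ((N : ℝ) * (2 * ((t : ℝ)) ^ (-(a * δ ^ 2 * w)))) := by
        calc ℙ {ω | pol t ω ≠ σ ⟨0, hN0⟩}
            ≤ ℙ (⋃ n : Fin N, {ω | δ ≤ |θbar n t ω - θ n|}) := measure_mono hsub
          _ ≤ ∑' n : Fin N, ℙ {ω | δ ≤ |θbar n t ω - θ n|} := measure_iUnion_le _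
          _ = ∑ n : Fin N, ℙ {ω | δ ≤ |θbar n t ω - θ n|} := tsum_fintype _
          _ ≤ ∑ n : Fin N, ENNReal.ofReal (2 * Real.exp (-(a * δ ^ 2 * (τ n t)))) :=
              Finset.sum_le_sum (fun n _ => hdev n t ht1 htA)
          _ ≤ ∑ n : Fin N, ENNReal.ofReal (2 * ((t : ℝ)) ^ (-(a * δ ^ 2 * w))) :=
              Finset.sum_le_sum (fun n _ => ENNReal.ofReal_le_ofReal (hexp_le n))
          _ = ENNReal.ofReal ((N : ℝ) * (2 * ((t : ℝ)) ^ (-(a * δ ^ 2 * w)))) := by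
              rw [Finset.sum_const, Finset.card_univ, Fintype.card_fin, nsmul_eq_mul,
                ← ENNReal.ofReal_natCast N,
                ← ENNReal.ofReal_mul (by positivity)]
      have hfin : (ℙ {ω | pol t ω ≠ σ ⟨0, hN0⟩}).toReal
          ≤ (N : ℝ) * (2 * ((t : ℝ)) ^ (-(a * δ ^ 2 * w))) :=
        ENNReal.toReal_le_of_le_ofReal (by positivity) hμ
      calc θ (σ ⟨0, hN0⟩) - ∫ ω, θ (pol t ω) ∂ℙ
          = ∫ ω, (θ (σ ⟨0, hN0⟩) - θ (pol t ω)) ∂ℙ := hstep t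
        _ ≤ (ℙ {ω | pol t ω ≠ σ ⟨0, hN0⟩}).toReal * Δ ⟨N - 1, by omega⟩ := h1
        _ ≤ ((N : ℝ) * (2 * ((t : ℝ)) ^ (-(a * δ ^ 2 * w)))) * Δ ⟨N - 1, by omega⟩ :=
            mul_le_mul_of_nonneg_right hfin hΔmaxnn
        _ = 2 * N * Δ ⟨N - 1, by omega⟩ * ((t : ℝ)) ^ (-(a * δ ^ 2 * w)) := by ring
    refine le_trans (Finset.sum_le_sum hterm) ?_
    rw [← Finset.mul_sum]
    have hsum : ∑ t ∈ (Finset.Icc 1 T).filter (fun t => ¬ t ∈ A),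
        ((t : ℝ)) ^ (-(a * δ ^ 2 * w)) ≤ 1 + 1 / (a * δ ^ 2 * w - 1) := by
      refine le_trans ?_ (dsee_aux_series (a * δ ^ 2 * w) hp1 T)
      exact Finset.sum_le_sum_of_subset_of_nonneg (Finset.filter_subset _ _)
        (fun t _ _ => by positivity)
    have hnn : 0 ≤ 2 * (N : ℝ) * Δ ⟨N - 1, by omega⟩ :=
      mul_nonneg (by positivity) hΔmaxnn
    exact mul_le_mul_of_nonneg_left hsum hnn
  exact add_le_add hexp1 hexp2
end
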